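/- Fix an integer K ≥ 1 and reals ρ_i > 0 and p ∈ [0,1]. Set ρ_{i,p} = ρ_i·p, a_0 = Σ_{j=0}^{K} ρ_{i,p}^j, and P_B^{PS}(p) = (1−p) + p·ρ_{i,p}^K / a_0. Then 1 − ρ_i·(1 − P_B^{PS}(p)) = 1/a_0. Consequently, for any λ_t > 0 and μ_t > 0 with λ_t·a_0 < μ_t, one has 1/(μ_t·(1 − ρ_i·(1 − P_B^{PS}(p))) − λ_t) = a_0/(μ_t − λ_t·a_0); that is, the PS policies satisfy the pseudo conservation law E_{S_t}(P_B) = 1/(μ_t(1 − ρ_i(1 − P_B)) − λ_t). -/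

import Mathlib

/-- The PS policies satisfy the pseudo conservation law. -/
theorem ps_pseudo_conservation
    (K : ℕ) (hK : 1 ≤ K) (ρ p : ℝ) (hρ : 0 < ρ) (hp0 : 0 ≤ p) (hp1 : p ≤ 1) :
    (1 - ρ * (1 - ((1 - p) + p * (ρ * p) ^ K / (∑ j ∈ Finset.range (K + 1), (ρ * p) ^ j)))
        = 1 / (∑ j ∈ Finset.range (K + 1), (ρ * p) ^ j))
    ∧ ∀ lamt μt : ℝ, 0 < lamt → 0 < μt →
        lamt * (∑ j ∈ Finset.range (K + 1), (ρ * p) ^ j) < μt →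
        1 / (μt * (1 - ρ * (1 - ((1 - p) + p * (ρ * p) ^ K
              / (∑ j ∈ Finset.range (K + 1), (ρ * p) ^ j)))) - lamt)
          = (∑ j ∈ Finset.range (K + 1), (ρ * p) ^ j)
              / (μt - lamt * (∑ j ∈ Finset.range (K + 1), (ρ * p) ^ j)) := by
  set x := ρ * p with hx
  set a := ∑ j ∈ Finset.range (K + 1), x ^ j with ha
  have hxnn : 0 ≤ x := mul_nonneg hρ.le hp0
  have hapos : 0 < a := by
    have h1 : (1:ℝ) ≤ a := by
      calc (1:ℝ) = ∑ j ∈ Finset.range 1, x ^ j := by simp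
        _ ≤ a := Finset.sum_le_sum_of_subset_of_nonneg
            (Finset.range_subset_range.2 (by omega))
            (fun i _ _ => pow_nonneg hxnn i)
    linarith
  have hane : a ≠ 0 := ne_of_gt hapos
  have hkey : a * (x - 1) = x ^ (K + 1) - 1 := geom_sum_mul x (K + 1)
  have hmain : 1 - ρ * (1 - ((1 - p) + p * x ^ K / a)) = 1 / a := by
    field_simp
    have : ρ * p * x ^ K = x ^ (K + 1) := by rw [hx]; ring
    nlinarith [hkey, this]
  refine ⟨hmain, fun lamt μt hl hm hlt => ?_⟩
  rw [hmain]
  have hden : μt - lamt * a > 0 := by linarith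
  have h2 : μt * (1 / a) - lamt = (μt - lamt * a) / a := by field_simp
  rw [h2, one_div, inv_div]
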